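/- Let E be a vector space over a field K and let ψ be an order isomorphism of the poset of finite-dimensional subspaces of E onto itself. Then the map φ(N) = ⋃{ψ(M) : M ⊆ N, dim M < ∞} defines an automorphism of the lattice of all subspaces of E extending ψ. -/

import Mathlib

section Aux

variable {K E : Type*} [Field K] [AddCommGroup E] [Module K E]

private def phi13 (ψ : {M : Submodule K E // FiniteDimensional K M} ≃o
    {M : Submodule K E // FiniteDimensional K M}) (N : Submodule K E) : Submodule K E :=
  ⨆ (M : {M : Submodule K E // FiniteDimensional K M}) (_ : M.1 ≤ N), (ψ M).1

private lemma phi13_mono (ψ : {M : Submodule K E // FiniteDimensional K M} ≃o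
    {M : Submodule K E // FiniteDimensional K M}) : Monotone (phi13 ψ) := by
  intro N N' h
  exact iSup₂_le fun M hM => le_iSup₂ (f := fun M _ => (ψ M).1) M (hM.trans h)

private lemma phi13_fin (ψ : {M : Submodule K E // FiniteDimensional K M} ≃o
    {M : Submodule K E // FiniteDimensional K M})
    (M : {M : Submodule K E // FiniteDimensional K M}) : phi13 ψ M.1 = (ψ M).1 := by
  apply le_antisymm
  · exact iSup₂_le fun M' hM' => by exact_mod_cast ψ.monotone (show M' ≤ M from hM')
  · exact le_iSup₂ (f := fun M' (_ : M'.1 ≤ M.1) => (ψ M').1) M le_rfl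

private lemma exists_fin_le (ψ : {M : Submodule K E // FiniteDimensional K M} ≃o
    {M : Submodule K E // FiniteDimensional K M}) (N : Submodule K E)
    (M' : {M : Submodule K E // FiniteDimensional K M}) (h : M'.1 ≤ phi13 ψ N) :
    ∃ M : {M : Submodule K E // FiniteDimensional K M}, M.1 ≤ N ∧ M'.1 ≤ (ψ M).1 := by
  have hcomp : IsCompactElement M'.1 :=
    (Submodule.fg_iff_compact _).mp ((Submodule.fg_iff_finiteDimensional _).mpr M'.2)
  set s : Set (Submodule K E) :=
    {P | ∃ M : {M : Submodule K E // FiniteDimensional K M}, M.1 ≤ N ∧ P = (ψ M).1} with hs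
  have hsup : phi13 ψ N = sSup s := by
    apply le_antisymm
    · exact iSup₂_le fun M hM => le_sSup ⟨M, hM, rfl⟩
    · exact sSup_le fun P ⟨M, hM, hP⟩ => hP ▸ le_iSup₂ (f := fun M _ => (ψ M).1) M hM
  have hne : s.Nonempty := ⟨(ψ ⟨⊥, inferInstance⟩).1, ⟨⊥, inferInstance⟩, bot_le, rfl⟩
  have hdir : DirectedOn (· ≤ ·) s := by
    rintro _ ⟨M₁, h₁, rfl⟩ _ ⟨M₂, h₂, rfl⟩
    haveI := M₁.2; haveI := M₂.2
    set Msup : {M : Submodule K E // FiniteDimensional K M} :=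
      ⟨M₁.1 ⊔ M₂.1, Submodule.finiteDimensional_sup M₁.1 M₂.1⟩ with hMsup
    refine ⟨(ψ Msup).1, ⟨Msup, sup_le h₁ h₂, rfl⟩, ?_, ?_⟩
    · exact_mod_cast ψ.monotone (show M₁ ≤ Msup from Subtype.mk_le_mk.mpr le_sup_left)
    · exact_mod_cast ψ.monotone (show M₂ ≤ Msup from Subtype.mk_le_mk.mpr le_sup_right)
  obtain ⟨x, ⟨M, hM, rfl⟩, hx⟩ :=
    (CompleteLattice.isCompactElement_iff_le_of_directed_sSup_le _ _).mp hcomp s hne hdir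
      (hsup ▸ h)
  exact ⟨M, hM, hx⟩

private lemma self_eq_iSup (N : Submodule K E) :
    N = ⨆ (M : {M : Submodule K E // FiniteDimensional K M}) (_ : M.1 ≤ N), M.1 := by
  apply le_antisymm
  · intro x hx
    have hsp : (Submodule.span K {x} : Submodule K E) ≤ N := by
      rw [Submodule.span_singleton_le_iff_mem]; exact hx
    have : x ∈ (Submodule.span K {x} : Submodule K E) := Submodule.mem_span_singleton_self x
    exact le_iSup₂ (f := fun (M : {M : Submodule K E // FiniteDimensional K M})
      (_ : M.1 ≤ N) => M.1) ⟨Submodule.span K {x}, inferInstance⟩ hsp this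
  · exact iSup₂_le fun M hM => hM

private lemma phi13_inv (ψ : {M : Submodule K E // FiniteDimensional K M} ≃o
    {M : Submodule K E // FiniteDimensional K M}) (N : Submodule K E) :
    phi13 ψ.symm (phi13 ψ N) = N := by
  apply le_antisymm
  · refine iSup₂_le fun M' hM' => ?_
    obtain ⟨M, hM, hle⟩ := exists_fin_le ψ N M' hM'
    have : ψ.symm M' ≤ M := by
      have := ψ.symm.monotone (show M' ≤ ψ M from hle)
      simpa using this
    exact le_trans this hM
  · conv_lhs => rw [self_eq_iSup N]
    refine iSup₂_le fun M hM => ?_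
    have h1 : (ψ M).1 ≤ phi13 ψ N := le_iSup₂ (f := fun M _ => (ψ M).1) M hM
    have := le_iSup₂ (f := fun (M' : {M : Submodule K E // FiniteDimensional K M})
      (_ : M'.1 ≤ phi13 ψ N) => (ψ.symm M').1) (ψ M) h1
    simpa [phi13] using this

end Aux

theorem stmt_13 {K E : Type*} [Field K] [AddCommGroup E] [Module K E]
    (ψ : {M : Submodule K E // FiniteDimensional K M} ≃o
          {M : Submodule K E // FiniteDimensional K M}) :
    ∃ Φ : Submodule K E ≃o Submodule K E,
      (∀ N : Submodule K E,
        Φ N = ⨆ (M : {M : Submodule K E // FiniteDimensional K M}) (_ : M.1 ≤ N),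
          (ψ M).1) ∧
      ∀ M : {M : Submodule K E // FiniteDimensional K M}, Φ M.1 = (ψ M).1 := by
  refine ⟨{ toFun := phi13 ψ, invFun := phi13 ψ.symm,
            left_inv := phi13_inv ψ,
            right_inv := fun N => by simpa using phi13_inv ψ.symm N,
            map_rel_iff' := ?_ }, fun N => rfl, phi13_fin ψ⟩
  intro N N'
  show phi13 ψ N ≤ phi13 ψ N' ↔ N ≤ N'
  constructor
  · intro h
    have := phi13_mono ψ.symm h
    rwa [phi13_inv ψ N, phi13_inv ψ N'] at this
  · exact fun h => phi13_mono ψ h
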